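/- For a set X with an endofunction f : X → X, if X cannot be written as a disjoint union of two nonempty f-invariant subsets and X is nonempty, then for all x, y ∈ X there exist natural numbers n, m with f^n(x) = f^m(y). -/
import Mathlib

theorem stmt_1 {X : Type*} (f : X → X) (hne : Nonempty X)
    (hnosplit : ¬ ∃ S T : Set X, S.Nonempty ∧ T.Nonempty ∧
      (∀ x ∈ S, f x ∈ S) ∧ (∀ x ∈ T, f x ∈ T) ∧
      Disjoint S T ∧ S ∪ T = Set.univ) :
    ∀ x y : X, ∃ n m : ℕ, f^[n] x = f^[m] y := by
  intro x y
  by_contra h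
  push_neg at h
  apply hnosplit
  refine ⟨{z | ∃ n m : ℕ, f^[n] z = f^[m] x}, {z | ∃ n m : ℕ, f^[n] z = f^[m] x}ᶜ,
    ⟨x, 0, 0, rfl⟩, ⟨y, ?_⟩, ?_, ?_, disjoint_compl_right, Set.union_compl_self _⟩
  · rintro ⟨n, m, hnm⟩
    exact h m n hnm.symm
  · rintro z ⟨n, m, hz⟩
    exact ⟨n, m + 1, by
      rw [← Function.iterate_succ_apply, Function.iterate_succ_apply', hz]
      exact (Function.iterate_succ_apply' f m x).symm⟩
  · rintro z hz ⟨n, m, hfz⟩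
    exact hz ⟨n + 1, m, by rwa [Function.iterate_succ_apply]⟩
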